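/- For all positive integers m and n, every complex critical value of the polynomial β_{m,n}(x) = ((m+n)^(m+n)/(m^m n^n)) x^m (1-x)^n lies in {0, 1}; more precisely, every complex root of the derivative of β_{m,n} lies in {0, 1, m/(m+n)}, and β_{m,n}(0) = 0, β_{m,n}(1) = 0, β_{m,n}(m/(m+n)) = 1. -/

import Mathlib

open Polynomial

/-- The Belyĭ polynomial `β_{m,n}(x) = ((m+n)^(m+n)/(m^m n^n)) x^m (1-x)^n`, over `ℂ`. -/
noncomputable def beta (m n : ℕ) : Polynomial ℂ :=
  C ((m + n : ℂ) ^ (m + n) / ((m : ℂ) ^ m * (n : ℂ) ^ n)) * X ^ m * (1 - X) ^ n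

/-- For positive `m, n`: every root of the derivative of `β_{m,n}` lies in
`{0, 1, m/(m+n)}`, we have `β_{m,n}(0) = 0`, `β_{m,n}(1) = 0`,
`β_{m,n}(m/(m+n)) = 1`, and hence every critical value of `β_{m,n}` lies in `{0, 1}`. -/
theorem beta_critical_values (m n : ℕ) (hm : 0 < m) (hn : 0 < n) :
    (∀ z : ℂ, (derivative (beta m n)).eval z = 0 →
      z = 0 ∨ z = 1 ∨ z = (m : ℂ) / (m + n)) ∧
    (beta m n).eval 0 = 0 ∧ (beta m n).eval 1 = 0 ∧
    (beta m n).eval ((m : ℂ) / (m + n)) = 1 ∧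
    (∀ z : ℂ, (derivative (beta m n)).eval z = 0 →
      (beta m n).eval z = 0 ∨ (beta m n).eval z = 1) := by
  obtain ⟨a, rfl⟩ : ∃ a, m = a + 1 := ⟨m - 1, (Nat.succ_pred_eq_of_pos hm).symm⟩
  obtain ⟨b, rfl⟩ : ∃ b, n = b + 1 := ⟨n - 1, (Nat.succ_pred_eq_of_pos hn).symm⟩
  have hA : ((a : ℂ) + 1) ≠ 0 := by exact_mod_cast (Nat.cast_ne_zero (R := ℂ)).mpr (Nat.succ_ne_zero a)
  have hB : ((b : ℂ) + 1) ≠ 0 := by exact_mod_cast (Nat.cast_ne_zero (R := ℂ)).mpr (Nat.succ_ne_zero b)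
  have hS : ((a : ℂ) + 1) + ((b : ℂ) + 1) ≠ 0 := by
    have : ((a + 1 + (b + 1) : ℕ) : ℂ) ≠ 0 :=
      (Nat.cast_ne_zero (R := ℂ)).mpr (by omega)
    push_cast at this; convert this using 2 <;> ring
  have hc : ((a+1+(b+1) : ℂ) ^ (a+1+(b+1)) / ((a+1 : ℂ) ^ (a+1) * (b+1 : ℂ) ^ (b+1))) ≠ 0 := by
    apply div_ne_zero
    · exact pow_ne_zero _ (by push_cast; exact hS)
    · exact mul_ne_zero (pow_ne_zero _ (by push_cast; exact hA)) (pow_ne_zero _ (by push_cast; exact hB))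
  have key : ∀ z : ℂ, (derivative (beta (a+1) (b+1))).eval z =
      ((a+1+(b+1) : ℂ) ^ (a+1+(b+1)) / ((a+1 : ℂ) ^ (a+1) * (b+1 : ℂ) ^ (b+1))) *
        (z ^ a * (1 - z) ^ b * (((a:ℂ)+1)*(1-z) - ((b:ℂ)+1)*z)) := by
    intro z
    simp [beta, derivative_mul, derivative_pow, derivative_X]
    ring
  have hroot : ∀ z : ℂ, (derivative (beta (a+1) (b+1))).eval z = 0 →
      z = 0 ∨ z = 1 ∨ z = ((a+1 : ℕ) : ℂ) / ((a+1 : ℕ) + (b+1 : ℕ)) := by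
    intro z hz
    rw [key z] at hz
    rcases mul_eq_zero.mp hz with h | h
    · exact absurd h hc
    rcases mul_eq_zero.mp h with h | h
    · rcases mul_eq_zero.mp h with h | h
      · left; exact pow_eq_zero_iff'.mp h |>.1
      · right; left
        have := pow_eq_zero_iff'.mp h |>.1
        linear_combination -this
    · right; right
      push_cast
      rw [eq_div_iff (by push_cast; exact hS)]
      linear_combination -h
  have hval : (beta (a+1) (b+1)).eval (((a+1:ℕ):ℂ) / (((a+1:ℕ):ℂ) + ((b+1:ℕ):ℂ))) = 1 := by
    have h1 : (1 : ℂ) - ((a+1:ℕ) : ℂ) / (((a+1:ℕ):ℂ) + ((b+1:ℕ):ℂ)) = ((b+1:ℕ):ℂ) / (((a+1:ℕ):ℂ) + ((b+1:ℕ):ℂ)) := by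
      push_cast; field_simp; ring
    simp only [beta, eval_mul, eval_pow, eval_C, eval_X, eval_sub, eval_one]
    push_cast at h1 ⊢
    rw [h1, div_pow, div_pow]
    rw [div_mul_div_comm, div_mul_div_comm]
    rw [show (a:ℂ)+1+((b:ℂ)+1) = ((a:ℂ)+1)+((b:ℂ)+1) by ring, pow_add]
    have hd : ((↑a+1)^(a+1) * (↑b+1)^(b+1) * ((↑a:ℂ)+1+(↑b+1))^(a+1) * ((↑a:ℂ)+1+(↑b+1))^(b+1) : ℂ) ≠ 0 :=
      mul_ne_zero (mul_ne_zero (mul_ne_zero (pow_ne_zero _ hA) (pow_ne_zero _ hB)) (pow_ne_zero _ hS)) (pow_ne_zero _ hS)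
    rw [div_eq_one_iff_eq hd]
    ring
  refine ⟨by exact_mod_cast hroot, by simp [beta], by simp [beta], by exact_mod_cast hval, ?_⟩
  intro z hz
  rcases hroot z (by exact_mod_cast hz) with rfl | rfl | rfl
  · left; simp [beta]
  · left; simp [beta]
  · right; exact_mod_cast hval
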